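/- Let T ∈ B(X) satisfy (GFS)₁ with constant C. Then T has the 1-derivative bounded functional calculus: for all r > 1 and bounded holomorphic φ on rD, ‖φ'(T)‖ ≤ C/(2π(r−1)) ‖φ‖_{H^∞(rD)}. -/

import Mathlib

open Complex MeasureTheory Metric Filter
open scoped Real Topology

theorem stmt8 {X : Type*} [NormedAddCommGroup X] [NormedSpace ℂ X] [CompleteSpace X]
    (T : X →L[ℂ] X) (hσ : spectrum ℂ T ⊆ closedBall 0 1)
    (C : ℝ) (hC : 0 < C)
    (hGFS : ∀ r : ℝ, 1 < r → ∀ (x : X) (x' : StrongDual ℂ X),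
      ∫ t in (0:ℝ)..(2*π), ‖x' ((resolvent T ((r : ℂ) * exp (t * I)) ^ 2) x)‖
        ≤ C / ((r+1)*(r-1)) * ‖x‖ * ‖x'‖)
    (r : ℝ) (hr : 1 < r) (φ : ℂ → ℂ)
    (hφ : DifferentiableOn ℂ φ (ball 0 r))
    (hφb : ∃ M, ∀ z ∈ ball (0:ℂ) r, ‖φ z‖ ≤ M)
    (A : X →L[ℂ] X)
    (hA : ∀ ρ : ℝ, 1 < ρ → ρ < r →
      A = (1 / (2*π) : ℝ) • (∫ t in (0:ℝ)..(2*π),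
        ((ρ : ℂ) * exp (t * I) * φ ((ρ : ℂ) * exp (t * I))) •
          resolvent T ((ρ : ℂ) * exp (t * I)) ^ 2)) :
    ‖A‖ ≤ C / (2*π*(r-1)) * ⨆ z ∈ ball (0:ℂ) r, ‖φ z‖ := by
  have hπ : (0:ℝ) < π := Real.pi_pos
  have hr0 : (0:ℝ) < r := lt_trans one_pos hr
  obtain ⟨M₀, hM₀⟩ := hφb
  set M : ℝ := ⨆ z ∈ ball (0:ℂ) r, ‖φ z‖ with hMdef
  have hbdd : ∀ z ∈ ball (0:ℂ) r, ‖φ z‖ ≤ M := by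
    intro z hz
    refine le_ciSup_of_le ?_ z (ciSup_pos (f := fun _ => ‖φ z‖) hz).ge
    refine ⟨max M₀ 0, ?_⟩
    rintro y ⟨w, rfl⟩
    exact Real.iSup_le (fun hw => le_max_of_le_left (hM₀ w hw)) (le_max_right _ _)
  have hMnn : (0:ℝ) ≤ M :=
    le_trans (norm_nonneg (φ 0)) (hbdd 0 (mem_ball_self hr0))
  have key : ∀ ρ : ℝ, 1 < ρ → ρ < r →
      ‖A‖ ≤ 1/(2*π) * (ρ * M * (C / ((ρ+1)*(ρ-1)))) := by
    intro ρ hρ1 hρr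
    have hρ0 : (0:ℝ) < ρ := lt_trans one_pos hρ1
    have hρd : (0:ℝ) < (ρ+1)*(ρ-1) := by nlinarith
    have hnorm : ∀ t : ℝ, ‖(ρ:ℂ) * exp ((t:ℂ) * I)‖ = ρ := by
      intro t
      rw [norm_mul, Complex.norm_exp_ofReal_mul_I, mul_one, Complex.norm_real,
        Real.norm_eq_abs, abs_of_pos hρ0]
    have hres : ∀ t : ℝ, (ρ:ℂ) * exp ((t:ℂ) * I) ∈ resolventSet ℂ T := by
      intro t
      by_contra h
      have hmem : (ρ:ℂ) * exp ((t:ℂ) * I) ∈ spectrum ℂ T := h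
      have := hσ hmem
      rw [mem_closedBall, dist_zero_right, hnorm t] at this
      linarith
    have hmemball : ∀ t : ℝ, (ρ:ℂ) * exp ((t:ℂ) * I) ∈ ball (0:ℂ) r := by
      intro t
      rw [mem_ball, dist_zero_right, hnorm t]; exact hρr
    have hcurve : Continuous fun t : ℝ => (ρ:ℂ) * exp ((t:ℂ) * I) := by fun_prop
    have hcres : Continuous fun t : ℝ => resolvent T ((ρ:ℂ) * exp ((t:ℂ) * I)) :=
      continuous_iff_continuousAt.mpr fun t =>
        ContinuousAt.comp (g := resolvent T)
          ((spectrum.hasDerivAt_resolvent (hres t)).differentiableAt.continuousAt)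
          hcurve.continuousAt
    have hφc : Continuous fun t : ℝ => φ ((ρ:ℂ) * exp ((t:ℂ) * I)) :=
      continuous_iff_continuousAt.mpr fun t =>
        ContinuousAt.comp (g := φ)
          (hφ.continuousOn.continuousAt (isOpen_ball.mem_nhds (hmemball t)))
          hcurve.continuousAt
    have hFc : Continuous fun t : ℝ =>
        ((ρ:ℂ) * exp ((t:ℂ) * I) * φ ((ρ:ℂ) * exp ((t:ℂ) * I))) •
          resolvent T ((ρ:ℂ) * exp ((t:ℂ) * I)) ^ 2 :=
      (hcurve.mul hφc).smul ((hcres.pow 2))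
    have hFint : IntervalIntegrable (fun t : ℝ =>
        ((ρ:ℂ) * exp ((t:ℂ) * I) * φ ((ρ:ℂ) * exp ((t:ℂ) * I))) •
          resolvent T ((ρ:ℂ) * exp ((t:ℂ) * I)) ^ 2) volume 0 (2*π) :=
      hFc.intervalIntegrable 0 (2*π)
    rw [hA ρ hρ1 hρr]
    have hKnn : (0:ℝ) ≤ 1/(2*π) * (ρ * M * (C / ((ρ+1)*(ρ-1)))) := by positivity
    refine ContinuousLinearMap.opNorm_le_bound _ hKnn (fun x => ?_)
    refine NormedSpace.norm_le_dual_bound ℂ _ (by positivity) (fun x' => ?_)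
    set Φ : (X →L[ℂ] X) →L[ℂ] ℂ := x'.comp (ContinuousLinearMap.apply ℂ X x) with hΦ
    have hval : x' (((1 / (2*π) : ℝ) • (∫ t in (0:ℝ)..(2*π),
        ((ρ:ℂ) * exp ((t:ℂ) * I) * φ ((ρ:ℂ) * exp ((t:ℂ) * I))) •
          resolvent T ((ρ:ℂ) * exp ((t:ℂ) * I)) ^ 2)) x)
        = (1/(2*π) : ℝ) • ∫ t in (0:ℝ)..(2*π),
            ((ρ:ℂ) * exp ((t:ℂ) * I) * φ ((ρ:ℂ) * exp ((t:ℂ) * I))) *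
              x' ((resolvent T ((ρ:ℂ) * exp ((t:ℂ) * I)) ^ 2) x) := by
      have hcomm := Φ.intervalIntegral_comp_comm hFint
      calc x' (((1 / (2*π) : ℝ) • (∫ t in (0:ℝ)..(2*π),
              ((ρ:ℂ) * exp ((t:ℂ) * I) * φ ((ρ:ℂ) * exp ((t:ℂ) * I))) •
                resolvent T ((ρ:ℂ) * exp ((t:ℂ) * I)) ^ 2)) x)
          = (1/(2*π) : ℝ) • Φ (∫ t in (0:ℝ)..(2*π),
              ((ρ:ℂ) * exp ((t:ℂ) * I) * φ ((ρ:ℂ) * exp ((t:ℂ) * I))) •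
                resolvent T ((ρ:ℂ) * exp ((t:ℂ) * I)) ^ 2) := by
            rw [ContinuousLinearMap.smul_apply, ContinuousLinearMap.map_smul_of_tower]
            rfl
        _ = (1/(2*π) : ℝ) • ∫ t in (0:ℝ)..(2*π),
              Φ (((ρ:ℂ) * exp ((t:ℂ) * I) * φ ((ρ:ℂ) * exp ((t:ℂ) * I))) •
                resolvent T ((ρ:ℂ) * exp ((t:ℂ) * I)) ^ 2) := by rw [hcomm]
        _ = (1/(2*π) : ℝ) • ∫ t in (0:ℝ)..(2*π),
              ((ρ:ℂ) * exp ((t:ℂ) * I) * φ ((ρ:ℂ) * exp ((t:ℂ) * I))) *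
                x' ((resolvent T ((ρ:ℂ) * exp ((t:ℂ) * I)) ^ 2) x) := by
            congr 1
            refine intervalIntegral.integral_congr (fun t _ => ?_)
            simp [hΦ, ContinuousLinearMap.comp_apply, ContinuousLinearMap.apply_apply,
              ContinuousLinearMap.smul_apply, smul_eq_mul]
    rw [hval, norm_smul, Real.norm_eq_abs, abs_of_pos (by positivity : (0:ℝ) < 1/(2*π))]
    -- continuity of the scalar integrands
    have hgc : Continuous fun t : ℝ => ‖x' ((resolvent T ((ρ:ℂ) * exp ((t:ℂ) * I)) ^ 2) x)‖ :=
      (x'.continuous.comp ((hcres.pow 2).clm_apply continuous_const)).norm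
    have hfc : Continuous fun t : ℝ =>
        ‖((ρ:ℂ) * exp ((t:ℂ) * I) * φ ((ρ:ℂ) * exp ((t:ℂ) * I))) *
          x' ((resolvent T ((ρ:ℂ) * exp ((t:ℂ) * I)) ^ 2) x)‖ :=
      ((hcurve.mul hφc).mul
        (x'.continuous.comp ((hcres.pow 2).clm_apply continuous_const))).norm
    have h1 : ‖∫ t in (0:ℝ)..(2*π), ((ρ:ℂ) * exp ((t:ℂ) * I) * φ ((ρ:ℂ) * exp ((t:ℂ) * I))) *
          x' ((resolvent T ((ρ:ℂ) * exp ((t:ℂ) * I)) ^ 2) x)‖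
        ≤ ∫ t in (0:ℝ)..(2*π), ‖((ρ:ℂ) * exp ((t:ℂ) * I) * φ ((ρ:ℂ) * exp ((t:ℂ) * I))) *
          x' ((resolvent T ((ρ:ℂ) * exp ((t:ℂ) * I)) ^ 2) x)‖ :=
      intervalIntegral.norm_integral_le_integral_norm (by positivity)
    have h2 : (∫ t in (0:ℝ)..(2*π), ‖((ρ:ℂ) * exp ((t:ℂ) * I) * φ ((ρ:ℂ) * exp ((t:ℂ) * I))) *
          x' ((resolvent T ((ρ:ℂ) * exp ((t:ℂ) * I)) ^ 2) x)‖)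
        ≤ ∫ t in (0:ℝ)..(2*π),
            ρ * M * ‖x' ((resolvent T ((ρ:ℂ) * exp ((t:ℂ) * I)) ^ 2) x)‖ := by
      refine intervalIntegral.integral_mono_on (by positivity)
        (hfc.intervalIntegrable 0 (2*π))
        (((continuous_const.mul hgc)).intervalIntegrable 0 (2*π)) (fun t _ => ?_)
      rw [norm_mul, norm_mul, hnorm t]
      have := hbdd _ (hmemball t)
      have hnn := norm_nonneg (x' ((resolvent T ((ρ:ℂ) * exp ((t:ℂ) * I)) ^ 2) x))
      exact mul_le_mul_of_nonneg_right (mul_le_mul_of_nonneg_left this hρ0.le) hnn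
    have h3 : (∫ t in (0:ℝ)..(2*π),
          ρ * M * ‖x' ((resolvent T ((ρ:ℂ) * exp ((t:ℂ) * I)) ^ 2) x)‖)
        ≤ ρ * M * (C / ((ρ+1)*(ρ-1)) * ‖x‖ * ‖x'‖) := by
      rw [intervalIntegral.integral_const_mul]
      exact mul_le_mul_of_nonneg_left (hGFS ρ hρ1 x x') (by positivity)
    calc 1/(2*π) * ‖∫ t in (0:ℝ)..(2*π),
          ((ρ:ℂ) * exp ((t:ℂ) * I) * φ ((ρ:ℂ) * exp ((t:ℂ) * I))) *
            x' ((resolvent T ((ρ:ℂ) * exp ((t:ℂ) * I)) ^ 2) x)‖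
        ≤ 1/(2*π) * (ρ * M * (C / ((ρ+1)*(ρ-1)) * ‖x‖ * ‖x'‖)) := by
          apply mul_le_mul_of_nonneg_left _ (by positivity)
          exact le_trans h1 (le_trans h2 h3)
      _ = 1/(2*π) * (ρ * M * (C / ((ρ+1)*(ρ-1)))) * ‖x‖ * ‖x'‖ := by ring
  -- take the limit ρ → r⁻
  have hden : ((r:ℝ)+1)*(r-1) ≠ 0 := by nlinarith
  have hct : ContinuousAt (fun ρ : ℝ => 1/(2*π) * (ρ * M * (C / ((ρ+1)*(ρ-1))))) r := by
    apply ContinuousAt.mul continuousAt_const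
    apply ContinuousAt.mul (ContinuousAt.mul continuousAt_id continuousAt_const)
    exact ContinuousAt.div continuousAt_const (by fun_prop) hden
  have hlim : Tendsto (fun ρ : ℝ => 1/(2*π) * (ρ * M * (C / ((ρ+1)*(ρ-1))))) (𝓝[<] r)
      (𝓝 (1/(2*π) * (r * M * (C / ((r+1)*(r-1)))))) :=
    hct.continuousWithinAt
  have hA_le : ‖A‖ ≤ 1/(2*π) * (r * M * (C / ((r+1)*(r-1)))) := by
    refine ge_of_tendsto hlim ?_
    filter_upwards [Ioo_mem_nhdsLT_of_mem (⟨hr, le_refl r⟩ : r ∈ Set.Ioc 1 r)] with ρ hρ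
    exact key ρ hρ.1 hρ.2
  refine le_trans hA_le ?_
  have hd1 : (0:ℝ) < (r+1)*(r-1)*(2*π) :=
    mul_pos (mul_pos (by linarith) (by linarith)) (by linarith)
  have hd2 : (0:ℝ) < 2*π*(r-1) := mul_pos (by linarith) (by linarith)
  have e1 : 1/(2*π) * (r * M * (C / ((r+1)*(r-1)))) = (r*M*C) / ((r+1)*(r-1)*(2*π)) := by
    rw [div_mul_eq_mul_div, one_mul, ← mul_div_assoc, div_div]
  have e2 : C / (2*π*(r-1)) * M = (C*M) / (2*π*(r-1)) := by ring
  rw [e1, e2, div_le_div_iff₀ hd1 hd2]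
  nlinarith [mul_nonneg (mul_nonneg (mul_nonneg (mul_nonneg hπ.le hC.le) hMnn)
    (sub_nonneg.mpr hr.le)) (by norm_num : (0:ℝ) ≤ 2)]
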